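/- arXiv:2405.05509 — 4 statements merged into one kernel-verified Lean document; each statement's English description precedes it below -/
import Mathlib

section
/- Let X and Y be real Banach spaces, S : X → Y a bounded linear operator, n ≥ 1, and ε > 0. Then there exist x_1, …, x_n in the closed unit ball of X and b_1, …, b_n in the closed unit ball of the dual space Y' such that ⟨S x_k, b_j⟩ = 0 whenever j < k, and (1 + ε)·|⟨S x_k, b_k⟩| ≥ c_k(S) for all k = 1, …, n, where c_k are the Gelfand numbers. -/
/-- The real Hilbert sequence space ℓ₂ = lp(ℕ, 2). -/
abbrev Ell2 : Type := lp (fun _ : ℕ => ℝ) 2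

/-- Approximation numbers. -/
noncomputable def approxNumber {X Y : Type*} [NormedAddCommGroup X] [NormedSpace ℝ X]
    [NormedAddCommGroup Y] [NormedSpace ℝ Y] (n : ℕ) (S : X →L[ℝ] Y) : ℝ :=
  sInf {r : ℝ | ∃ L : X →L[ℝ] Y, LinearMap.rank (L : X →ₗ[ℝ] Y) < n ∧ r = ‖S - L‖}

/-- Gelfand numbers. -/
noncomputable def gelfandNumber {X Y : Type*} [NormedAddCommGroup X] [NormedSpace ℝ X]
    [NormedAddCommGroup Y] [NormedSpace ℝ Y] (n : ℕ) (S : X →L[ℝ] Y) : ℝ :=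
  sInf {r : ℝ | ∃ M : Submodule ℝ X, IsClosed (M : Set X) ∧ Module.rank ℝ (X ⧸ M) < n ∧
    r = ‖S.comp M.subtypeL‖}

/-- The canonical quotient map onto `Y ⧸ N`, as a continuous linear map (with respect to
the quotient (semi)norm). -/
noncomputable def quotientCLM {Y : Type*} [NormedAddCommGroup Y] [NormedSpace ℝ Y]
    (N : Submodule ℝ Y) : Y →L[ℝ] Y ⧸ N :=
  LinearMap.mkContinuous N.mkQ 1 fun y => by
    simpa using Submodule.Quotient.norm_mk_le N y

/-- Kolmogorov numbers. -/
noncomputable def kolmogorovNumber {X Y : Type*} [NormedAddCommGroup X] [NormedSpace ℝ X]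
    [NormedAddCommGroup Y] [NormedSpace ℝ Y] (n : ℕ) (S : X →L[ℝ] Y) : ℝ :=
  sInf {r : ℝ | ∃ N : Submodule ℝ Y, Module.rank ℝ N < n ∧ r = ‖(quotientCLM N).comp S‖}

/-- Hilbert numbers. -/
noncomputable def hilbertNumber {X Y : Type*} [NormedAddCommGroup X] [NormedSpace ℝ X]
    [NormedAddCommGroup Y] [NormedSpace ℝ Y] (n : ℕ) (S : X →L[ℝ] Y) : ℝ :=
  sSup {r : ℝ | ∃ (A : Ell2 →L[ℝ] X) (B : Y →L[ℝ] Ell2), A ≠ 0 ∧ B ≠ 0 ∧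
    r = approxNumber n (B.comp (S.comp A)) / (‖B‖ * ‖A‖)}

set_option synthInstance.maxHeartbeats 1000000 in
set_option maxHeartbeats 1000000 in
lemma step_aux {X Y : Type*} [NormedAddCommGroup X] [NormedSpace ℝ X]
    [NormedAddCommGroup Y] [NormedSpace ℝ Y]
    (S : X →L[ℝ] Y) (k : ℕ) (b : Fin k → (Y →L[ℝ] ℝ)) (ε : ℝ) (hε : 0 < ε) :
    ∃ x : X, ‖x‖ ≤ 1 ∧ (∀ j, b j (S x) = 0) ∧
      gelfandNumber (k + 1) S ≤ (1 + ε) * ‖S x‖ := by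
  set M : Submodule ℝ X := ⨅ j, LinearMap.ker ((b j).comp S : X →ₗ[ℝ] ℝ) with hM
  have hclosed : IsClosed (M : Set X) := by
    rw [hM, Submodule.coe_iInf]
    exact isClosed_iInter fun j => ContinuousLinearMap.isClosed_ker ((b j).comp S)
  set φ : X →ₗ[ℝ] (Fin k → ℝ) := LinearMap.pi (fun j => ((b j).comp S : X →ₗ[ℝ] ℝ)) with hφ
  have hker : M = LinearMap.ker φ := by rw [hφ, LinearMap.ker_pi]
  have hrank : Module.rank ℝ (X ⧸ M) < (k + 1 : ℕ) := by
    rw [hker]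
    have e := (LinearMap.quotKerEquivRange φ).lift_rank_eq
    have h2 : Module.rank ℝ (LinearMap.range φ) ≤ (k : Cardinal) :=
      (Submodule.rank_le _).trans_eq (rank_fin_fun k)
    have hq : Module.rank ℝ (X ⧸ LinearMap.ker φ) ≤ (k : Cardinal) := by
      calc Module.rank ℝ (X ⧸ LinearMap.ker φ)
          = Cardinal.lift.{0} (Module.rank ℝ (X ⧸ LinearMap.ker φ)) :=
            (Cardinal.lift_uzero _).symm
        _ = Cardinal.lift.{_} (Module.rank ℝ (LinearMap.range φ)) := e
        _ ≤ Cardinal.lift.{_} ((k : ℕ) : Cardinal) := Cardinal.lift_le.mpr h2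
        _ = ((k : ℕ) : Cardinal) := by simp
    exact hq.trans_lt (by exact_mod_cast Nat.lt_succ_self k)
  have hle : gelfandNumber (k + 1) S ≤ ‖S.comp M.subtypeL‖ := by
    rw [gelfandNumber]
    refine csInf_le ?_ ⟨M, hclosed, hrank, rfl⟩
    refine ⟨0, ?_⟩
    intro r hr
    obtain ⟨N, h1, h2, h3⟩ := hr
    rw [h3]
    positivity
  rcases le_or_gt ‖S.comp M.subtypeL‖ 0 with h0 | h0
  · refine ⟨0, by simp, fun j => by simp, ?_⟩
    simp only [map_zero, norm_zero, mul_zero]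
    exact hle.trans h0
  · have hlt : ‖S.comp M.subtypeL‖ / (1 + ε) < ‖S.comp M.subtypeL‖ := by
      rw [div_lt_iff₀ (by linarith)]
      nlinarith
    obtain ⟨m, hm1, hm2⟩ := (S.comp M.subtypeL).exists_lt_apply_of_lt_opNorm hlt
    refine ⟨(m : X), le_of_lt hm1, ?_, ?_⟩
    · intro j
      have hmem : (m : X) ∈ (⨅ j, LinearMap.ker ((b j).comp S : X →ₗ[ℝ] ℝ) : Submodule ℝ X) := m.2
      have := (Submodule.mem_iInf _).mp hmem j
      simpa using this
    · have heq : (S.comp M.subtypeL) m = S (m : X) := rfl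
      rw [heq] at hm2
      have := (div_lt_iff₀ (by linarith : (0:ℝ) < 1 + ε)).mp hm2
      linarith

lemma triangular_aux {X Y : Type*} [NormedAddCommGroup X] [NormedSpace ℝ X]
    [NormedAddCommGroup Y] [NormedSpace ℝ Y] [CompleteSpace Y]
    (S : X →L[ℝ] Y) (ε : ℝ) (hε : 0 < ε) (n : ℕ) :
    ∃ (x : Fin n → X) (b : Fin n → (Y →L[ℝ] ℝ)),
      (∀ k, ‖x k‖ ≤ 1) ∧ (∀ k, ‖b k‖ ≤ 1) ∧
      (∀ j k : Fin n, j < k → b j (S (x k)) = 0) ∧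
      (∀ k : Fin n, gelfandNumber ((k : ℕ) + 1) S ≤ (1 + ε) * |b k (S (x k))|) := by
  induction n with
  | zero => exact ⟨Fin.elim0, Fin.elim0, fun k => k.elim0, fun k => k.elim0,
      fun j => j.elim0, fun k => k.elim0⟩
  | succ n ih =>
    obtain ⟨x, b, h1, h2, h3, h4⟩ := ih
    obtain ⟨xn, hx1, hx2, hx3⟩ := step_aux S n b ε hε
    obtain ⟨g, hg1, hg2⟩ := exists_dual_vector'' ℝ (S xn)
    refine ⟨Fin.snoc x xn, Fin.snoc b g, ?_, ?_, ?_, ?_⟩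
    · intro k
      rcases Fin.eq_castSucc_or_eq_last k with ⟨k', rfl⟩ | rfl
      · simpa using h1 k'
      · simpa using hx1
    · intro k
      rcases Fin.eq_castSucc_or_eq_last k with ⟨k', rfl⟩ | rfl
      · simpa using h2 k'
      · simpa using hg1
    · intro j k hjk
      rcases Fin.eq_castSucc_or_eq_last k with ⟨k', rfl⟩ | rfl
      · have hjv : (j : ℕ) < n := lt_of_lt_of_le hjk (by simpa using k'.isLt.le)
        have hj : j = Fin.castSucc ⟨(j : ℕ), hjv⟩ := by ext; simp
        rw [hj, Fin.snoc_castSucc, Fin.snoc_castSucc]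
        exact h3 _ k' (by simpa [Fin.lt_def, ← hj] using hjk)
      · have hjv : (j : ℕ) < n := by simpa [Fin.lt_def] using hjk
        have hj : j = Fin.castSucc ⟨(j : ℕ), hjv⟩ := by ext; simp
        rw [hj, Fin.snoc_castSucc, Fin.snoc_last]
        exact hx2 _
    · intro k
      rcases Fin.eq_castSucc_or_eq_last k with ⟨k', rfl⟩ | rfl
      · simpa using h4 k'
      · simp only [Fin.snoc_last, Fin.val_last, hg2]
        simpa [abs_of_nonneg (norm_nonneg (S xn))] using hx3


theorem exists_triangular_system_gelfand
    {X Y : Type*} [NormedAddCommGroup X] [NormedSpace ℝ X] [CompleteSpace X]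
    [NormedAddCommGroup Y] [NormedSpace ℝ Y] [CompleteSpace Y]
    (S : X →L[ℝ] Y) (n : ℕ) (hn : 1 ≤ n) (ε : ℝ) (hε : 0 < ε) :
    ∃ (x : Fin n → X) (b : Fin n → (Y →L[ℝ] ℝ)),
      (∀ k, ‖x k‖ ≤ 1) ∧ (∀ k, ‖b k‖ ≤ 1) ∧
      (∀ j k : Fin n, j < k → b j (S (x k)) = 0) ∧
      (∀ k : Fin n, gelfandNumber ((k : ℕ) + 1) S ≤ (1 + ε) * |b k (S (x k))|) := by
  exact triangular_aux S ε hε n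
end

section
/- Let X and Y be real Banach spaces, S : X → Y a bounded linear operator, n ≥ 1, and ε > 0. Then there exist x_1, …, x_n in the closed unit ball of X and b_1, …, b_n in the closed unit ball of the dual space Y' such that ⟨S x_k, b_j⟩ = 0 whenever k < j, and (1 + ε)·|⟨S x_k, b_k⟩| ≥ d_k(S) for all k = 1, …, n, where d_k are the Kolmogorov numbers. -/
lemma step_lemma {X Y : Type*} [NormedAddCommGroup X] [NormedSpace ℝ X]
    [NormedAddCommGroup Y] [NormedSpace ℝ Y]
    (S : X →L[ℝ] Y) {ε : ℝ} (hε : 0 < ε) (N : Submodule ℝ Y) [FiniteDimensional ℝ N]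
    (m : ℕ) (hrank : Module.rank ℝ N < (m + 1 : ℕ)) :
    ∃ (x : X) (b : Y →L[ℝ] ℝ), ‖x‖ ≤ 1 ∧ ‖b‖ ≤ 1 ∧ (∀ y ∈ N, b y = 0) ∧
      kolmogorovNumber (m + 1) S ≤ (1 + ε) * |b (S x)| := by
  set d := kolmogorovNumber (m + 1) S with hd_def
  rcases le_or_gt d 0 with hd | hd
  · exact ⟨0, 0, by simp, by simp, fun y _ => rfl, by simpa using hd⟩
  · haveI : IsClosed (N : Set Y) := Submodule.closed_of_finiteDimensional N
    have hle : d ≤ ‖(quotientCLM N).comp S‖ := by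
      apply csInf_le
      · refine ⟨0, fun r hr => ?_⟩
        obtain ⟨M, _, hr⟩ := hr
        rw [hr]; exact ContinuousLinearMap.opNorm_nonneg _
      · exact ⟨N, hrank, rfl⟩
    have hlt : d / (1 + ε) < ‖(quotientCLM N).comp S‖ :=
      lt_of_lt_of_le (div_lt_self hd (by linarith)) hle
    obtain ⟨x, hx1, hx2⟩ := ContinuousLinearMap.exists_lt_apply_of_lt_opNorm _ hlt
    obtain ⟨g, hg1, hg2⟩ := exists_dual_vector'' ℝ (quotientCLM N (S x))
    refine ⟨x, g.comp (quotientCLM N), hx1.le, ?_, ?_, ?_⟩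
    · calc ‖g.comp (quotientCLM N)‖ ≤ ‖g‖ * ‖quotientCLM N‖ := ContinuousLinearMap.opNorm_comp_le _ _
        _ ≤ 1 * 1 := by
            have h1 : ‖quotientCLM N‖ ≤ 1 := LinearMap.mkContinuous_norm_le _ zero_le_one _
            exact mul_le_mul hg1 h1 (ContinuousLinearMap.opNorm_nonneg _) zero_le_one
        _ = 1 := one_mul 1
    · intro y hy
      have : quotientCLM N y = 0 := (Submodule.Quotient.mk_eq_zero _).mpr hy
      simp [ContinuousLinearMap.comp_apply, this]
    · have hval : g.comp (quotientCLM N) (S x) = ‖quotientCLM N (S x)‖ := by simpa using hg2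
      rw [hval, abs_of_nonneg (norm_nonneg _)]
      have h2 : d / (1 + ε) ≤ ‖quotientCLM N (S x)‖ := le_of_lt (by simpa using hx2)
      rw [div_le_iff₀ (by linarith)] at h2
      linarith

open Cardinal in
lemma aux_induction {X Y : Type*} [NormedAddCommGroup X] [NormedSpace ℝ X]
    [NormedAddCommGroup Y] [NormedSpace ℝ Y]
    (S : X →L[ℝ] Y) {ε : ℝ} (hε : 0 < ε) :
    ∀ m : ℕ, ∃ (x : Fin m → X) (b : Fin m → (Y →L[ℝ] ℝ)),
      (∀ k, ‖x k‖ ≤ 1) ∧ (∀ k, ‖b k‖ ≤ 1) ∧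
      (∀ k j : Fin m, k < j → b j (S (x k)) = 0) ∧
      (∀ k : Fin m, kolmogorovNumber ((k : ℕ) + 1) S ≤ (1 + ε) * |b k (S (x k))|) := by
  intro m
  induction m with
  | zero => exact ⟨Fin.elim0, Fin.elim0, fun k => k.elim0, fun k => k.elim0,
      fun k => k.elim0, fun k => k.elim0⟩
  | succ m ih =>
    obtain ⟨x, b, hx, hb, htri, hd⟩ := ih
    set N : Submodule ℝ Y := Submodule.span ℝ (Set.range fun i => S (x i)) with hN
    haveI : FiniteDimensional ℝ N := FiniteDimensional.span_of_finite ℝ (Set.finite_range _)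
    have hfr : Module.finrank ℝ N ≤ m := by
      simpa [Set.finrank] using finrank_range_le_card (fun i => S (x i))
    have hrank : Module.rank ℝ N < (m + 1 : ℕ) := by
      rw [← Module.finrank_eq_rank]
      exact_mod_cast Nat.lt_succ_of_le hfr
    obtain ⟨xn, bn, hxn, hbn, hvan, hdn⟩ := step_lemma S hε N m hrank
    refine ⟨Fin.snoc x xn, Fin.snoc b bn, ?_, ?_, ?_, ?_⟩
    · intro k
      refine Fin.lastCases ?_ ?_ k
      · simpa using hxn
      · intro i; simpa using hx i
    · intro k
      refine Fin.lastCases ?_ ?_ k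
      · simpa using hbn
      · intro i; simpa using hb i
    · intro k j
      refine Fin.lastCases ?_ ?_ j
      · intro hkj
        have hk : k ≠ Fin.last m := fun h => absurd hkj (h ▸ lt_irrefl _)
        obtain ⟨i, rfl⟩ := Fin.exists_castSucc_eq.mpr hk
        rw [Fin.snoc_last, Fin.snoc_castSucc]
        exact hvan _ (Submodule.subset_span ⟨i, rfl⟩)
      · intro j' hkj
        have hk : k ≠ Fin.last m := by
          intro h
          rw [h] at hkj
          exact absurd ((Fin.castSucc_lt_last j').trans hkj) (lt_irrefl _)
        obtain ⟨i, rfl⟩ := Fin.exists_castSucc_eq.mpr hk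
        rw [Fin.snoc_castSucc, Fin.snoc_castSucc]
        exact htri i j' (Fin.castSucc_lt_castSucc_iff.mp hkj)
    · intro k
      refine Fin.lastCases ?_ ?_ k
      · simp only [Fin.snoc_last, Fin.val_last]
        exact hdn
      · intro i
        simp only [Fin.snoc_castSucc, Fin.coe_castSucc]
        exact hd i

theorem exists_triangular_system_kolmogorov
    {X Y : Type*} [NormedAddCommGroup X] [NormedSpace ℝ X] [CompleteSpace X]
    [NormedAddCommGroup Y] [NormedSpace ℝ Y] [CompleteSpace Y]
    (S : X →L[ℝ] Y) (n : ℕ) (hn : 1 ≤ n) (ε : ℝ) (hε : 0 < ε) :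
    ∃ (x : Fin n → X) (b : Fin n → (Y →L[ℝ] ℝ)),
      (∀ k, ‖x k‖ ≤ 1) ∧ (∀ k, ‖b k‖ ≤ 1) ∧
      (∀ k j : Fin n, k < j → b j (S (x k)) = 0) ∧
      (∀ k : Fin n, kolmogorovNumber ((k : ℕ) + 1) S ≤ (1 + ε) * |b k (S (x k))|) := by
  exact aux_induction S hε n
end

section
/- Let n ≥ 1 and let S be a bounded linear operator from the n-dimensional real Euclidean space ℓ₂ⁿ to itself. Then the absolute value of the determinant of S equals the product of its approximation numbers: |det S| = ∏_{k=1}^n a_k(S). -/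
open RealInnerProductSpace Finset in
lemma approxNumber_eq_sqrt {n : ℕ} {E : Type*} [NormedAddCommGroup E] [InnerProductSpace ℝ E]
    (S : E →L[ℝ] E) (v : OrthonormalBasis (Fin n) ℝ E) (μ : Fin n → ℝ)
    (hμ0 : ∀ i, 0 ≤ μ i) (hanti : Antitone μ)
    (hS : ∀ x, ‖S x‖ ^ 2 = ∑ i, μ i * ⟪v i, x⟫ ^ 2) (k : Fin n) :
    approxNumber ((k : ℕ) + 1) S = Real.sqrt (μ k) := by
  classical
  haveI : FiniteDimensional ℝ E := Module.Finite.of_basis v.toBasis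
  have parseval : ∀ x : E, ‖x‖ ^ 2 = ∑ i, ⟪v i, x⟫ ^ 2 := by
    intro x
    have := v.sum_inner_mul_inner x x
    rw [← real_inner_self_eq_norm_sq, ← this]
    congr 1; ext i; rw [real_inner_comm x (v i)]; ring
  -- the truncation operator
  set L₀ : E →L[ℝ] E :=
    ∑ i ∈ Finset.Iio k, (innerSL ℝ (v i)).smulRight (S (v i)) with hL₀
  have hL₀apply : ∀ x, L₀ x = ∑ i ∈ Finset.Iio k, ⟪v i, x⟫ • S (v i) := by
    intro x
    rw [hL₀, ContinuousLinearMap.sum_apply]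
    simp
  have hrank₀ : LinearMap.rank (L₀ : E →ₗ[ℝ] E) < ((k : ℕ) + 1 : ℕ) := by
    have hle : LinearMap.range (L₀ : E →ₗ[ℝ] E) ≤
        Submodule.span ℝ ((Finset.Iio k).image (fun i => S (v i)) : Set E) := by
      rintro y ⟨x, rfl⟩
      rw [ContinuousLinearMap.coe_coe, hL₀apply]
      refine Submodule.sum_mem _ fun i hi => Submodule.smul_mem _ _ ?_
      exact Submodule.subset_span (Finset.mem_coe.mpr (Finset.mem_image.mpr ⟨i, hi, rfl⟩))
    have h1 : LinearMap.rank (L₀ : E →ₗ[ℝ] E) ≤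
        (((Finset.Iio k).image (fun i => S (v i))).card : Cardinal) :=
      (Submodule.rank_mono hle).trans (rank_span_finset_le _)
    have h2 : (((Finset.Iio k).image (fun i => S (v i))).card : Cardinal) ≤ ((k : ℕ) : Cardinal) := by
      have := (Finset.card_image_le (s := Finset.Iio k) (f := fun i => S (v i))).trans_eq
        (Fin.card_Iio k)
      exact_mod_cast this
    exact (h1.trans h2).trans_lt (by exact_mod_cast Nat.lt_succ_self (k : ℕ))
  have hnorm₀ : ‖S - L₀‖ ≤ Real.sqrt (μ k) := by
    refine ContinuousLinearMap.opNorm_le_bound _ (Real.sqrt_nonneg _) fun x => ?_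
    set y := x - ∑ j ∈ Finset.Iio k, ⟪v j, x⟫ • v j with hy
    have hval : (S - L₀) x = S y := by
      rw [hy, map_sub, map_sum]
      simp only [map_smul, ContinuousLinearMap.sub_apply, hL₀apply]
    have hinner : ∀ i : Fin n, ⟪v i, y⟫ = if i ∈ Finset.Iio k then 0 else ⟪v i, x⟫ := by
      intro i
      rw [hy, inner_sub_right, inner_sum]
      simp only [real_inner_smul_right]
      have : ∀ j ∈ Finset.Iio k, ⟪v j, x⟫ * ⟪v i, v j⟫ =
          if j = i then (if i ∈ Finset.Iio k then ⟪v i, x⟫ else 0) else 0 := by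
        intro j hj
        by_cases h : j = i
        · subst h
          simp only [hj, if_true]
          rw [real_inner_self_eq_norm_sq, v.orthonormal.1 j]; ring
        · rw [v.orthonormal.2 (Ne.symm h)]
          simp [h]
      rw [Finset.sum_congr rfl this, Finset.sum_ite_eq' (Finset.Iio k) i]
      by_cases hik : i ∈ Finset.Iio k <;> simp [hik]
    have hsq : ‖(S - L₀) x‖ ^ 2 ≤ μ k * ‖x‖ ^ 2 := by
      rw [hval, hS y]
      have hterm : ∀ i : Fin n, μ i * ⟪v i, y⟫ ^ 2 ≤ μ k * ⟪v i, x⟫ ^ 2 := by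
        intro i
        rw [hinner i]
        by_cases hik : i ∈ Finset.Iio k
        · simp only [hik, if_true]
          simpa using mul_nonneg (hμ0 k) (sq_nonneg (⟪v i, x⟫))
        · simp only [hik, if_false]
          have : k ≤ i := le_of_not_gt (by simpa [Finset.mem_Iio] using hik)
          exact mul_le_mul_of_nonneg_right (hanti this) (sq_nonneg _)
      calc ∑ i, μ i * ⟪v i, y⟫ ^ 2 ≤ ∑ i, μ k * ⟪v i, x⟫ ^ 2 := Finset.sum_le_sum fun i _ => hterm i
        _ = μ k * ∑ i, ⟪v i, x⟫ ^ 2 := by rw [Finset.mul_sum]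
        _ = μ k * ‖x‖ ^ 2 := by rw [parseval x]
    have h1 : ‖(S - L₀) x‖ = Real.sqrt (‖(S - L₀) x‖ ^ 2) := by
      rw [Real.sqrt_sq (norm_nonneg _)]
    rw [h1]
    calc Real.sqrt (‖(S - L₀) x‖ ^ 2) ≤ Real.sqrt (μ k * ‖x‖ ^ 2) := Real.sqrt_le_sqrt hsq
      _ = Real.sqrt (μ k) * ‖x‖ := by
          rw [Real.sqrt_mul (hμ0 k), Real.sqrt_sq (norm_nonneg _)]
  have hlow : ∀ L : E →L[ℝ] E, LinearMap.rank (L : E →ₗ[ℝ] E) < ((k : ℕ) + 1 : ℕ) →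
      Real.sqrt (μ k) ≤ ‖S - L‖ := by
    intro L hL
    have hk1 : (k : ℕ) + 1 ≤ n := k.2
    set w : Fin ((k : ℕ) + 1) → E := fun j => v (Fin.castLE hk1 j) with hw
    have hwon : Orthonormal ℝ w := v.orthonormal.comp _ (Fin.castLE_injective hk1)
    set V : Submodule ℝ E := Submodule.span ℝ (Set.range w) with hV
    have hdimV : Module.finrank ℝ V = (k : ℕ) + 1 := by
      rw [hV, finrank_span_eq_card hwon.linearIndependent, Fintype.card_fin]
    -- rank of L as a natural number
    have hrankL : Module.finrank ℝ (LinearMap.range (L : E →ₗ[ℝ] E)) < (k : ℕ) + 1 := by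
      have := hL
      rw [LinearMap.rank, ← Module.finrank_eq_rank] at this
      exact_mod_cast this
    -- the restriction of L to V has nontrivial kernel
    set f : V →ₗ[ℝ] E := (L : E →ₗ[ℝ] E).domRestrict V with hf
    have hker : LinearMap.ker f ≠ ⊥ := by
      intro hbot
      have hinj : Function.Injective f := LinearMap.ker_eq_bot.mp hbot
      have h1 : Module.finrank ℝ V ≤ Module.finrank ℝ (LinearMap.range (L : E →ₗ[ℝ] E)) := by
        have hr : LinearMap.range f ≤ LinearMap.range (L : E →ₗ[ℝ] E) := by
          rintro y ⟨x, rfl⟩; exact ⟨x, rfl⟩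
        calc Module.finrank ℝ V = Module.finrank ℝ (LinearMap.range f) :=
              (LinearMap.finrank_range_of_inj hinj).symm
          _ ≤ Module.finrank ℝ (LinearMap.range (L : E →ₗ[ℝ] E)) := Submodule.finrank_mono hr
      omega
    obtain ⟨x, hxker, hx0⟩ := Submodule.exists_mem_ne_zero_of_ne_bot hker
    set x0 : E := (x : E) with hx0def
    have hx0ne : x0 ≠ 0 := fun h => hx0 (Subtype.ext h)
    have hLx0 : L x0 = 0 := by
      have := LinearMap.mem_ker.mp hxker
      simpa [hf] using this
    -- coefficients of x0 beyond k vanish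
    have hcoef : ∀ i : Fin n, (k : ℕ) < (i : ℕ) → ⟪v i, x0⟫ = 0 := by
      intro i hi
      have hVle : V ≤ LinearMap.ker ((innerSL ℝ (v i)) : E →L[ℝ] ℝ).toLinearMap := by
        rw [hV, Submodule.span_le]
        rintro _ ⟨j, rfl⟩
        have hne : Fin.castLE hk1 j ≠ i := by
          intro h
          have : ((Fin.castLE hk1 j : Fin n) : ℕ) ≤ (k : ℕ) :=
            Nat.lt_succ_iff.mp (Fin.is_lt j)
          omega
        simp only [SetLike.mem_coe, LinearMap.mem_ker, ContinuousLinearMap.coe_coe, innerSL_apply_apply]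
        exact v.orthonormal.2 (Ne.symm hne)
      have := hVle x.2
      simpa using this
    -- norm lower bound
    have hsq : μ k * ‖x0‖ ^ 2 ≤ ‖S x0‖ ^ 2 := by
      rw [hS x0, parseval x0, Finset.mul_sum]
      refine Finset.sum_le_sum fun i _ => ?_
      by_cases hik : (i : ℕ) ≤ (k : ℕ)
      · exact mul_le_mul_of_nonneg_right (hanti (Fin.le_def.mpr hik)) (sq_nonneg _)
      · rw [hcoef i (by omega)]
        simp
    -- conclude
    have hx0pos : 0 < ‖x0‖ := norm_pos_iff.mpr hx0ne
    have h1 : Real.sqrt (μ k) * ‖x0‖ ≤ ‖S x0‖ := by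
      have : Real.sqrt (μ k * ‖x0‖ ^ 2) ≤ Real.sqrt (‖S x0‖ ^ 2) := Real.sqrt_le_sqrt hsq
      rwa [Real.sqrt_mul (hμ0 k), Real.sqrt_sq (norm_nonneg _), Real.sqrt_sq (norm_nonneg _)] at this
    have h2 : ‖S x0‖ = ‖(S - L) x0‖ := by
      rw [ContinuousLinearMap.sub_apply, hLx0, sub_zero]
    have h3 : ‖(S - L) x0‖ ≤ ‖S - L‖ * ‖x0‖ := (S - L).le_opNorm x0
    have := h1.trans (h2.le.trans h3)
    exact le_of_mul_le_mul_right (by linarith [this]) hx0pos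
  have hmem : ‖S - L₀‖ ∈ {r : ℝ | ∃ L : E →L[ℝ] E,
      LinearMap.rank (L : E →ₗ[ℝ] E) < ((k : ℕ) + 1 : ℕ) ∧ r = ‖S - L‖} := ⟨L₀, hrank₀, rfl⟩
  have hlb : ∀ r ∈ {r : ℝ | ∃ L : E →L[ℝ] E,
      LinearMap.rank (L : E →ₗ[ℝ] E) < ((k : ℕ) + 1 : ℕ) ∧ r = ‖S - L‖},
      Real.sqrt (μ k) ≤ r := by
    rintro r ⟨L, hLr, rfl⟩
    exact hlow L hLr
  unfold approxNumber
  refine le_antisymm ?_ (le_csInf ⟨_, hmem⟩ hlb)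
  exact (csInf_le ⟨Real.sqrt (μ k), hlb⟩ hmem).trans hnorm₀


-- sqrt of product
lemma Real.sqrt_prod' {ι : Type*} (s : Finset ι) (f : ι → ℝ) (h : ∀ i ∈ s, 0 ≤ f i) :
    Real.sqrt (∏ i ∈ s, f i) = ∏ i ∈ s, Real.sqrt (f i) := by
  classical
  induction s using Finset.induction_on with
  | empty => simp
  | insert a s hx ih =>
    rw [Finset.prod_insert hx, Finset.prod_insert hx,
      Real.sqrt_mul (h a (Finset.mem_insert_self a s)),
      ih fun i hi => h i (Finset.mem_insert_of_mem hi)]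


open RealInnerProductSpace Finset in
theorem abs_det_eq_prod_approxNumbers (n : ℕ) (hn : 1 ≤ n)
    (S : EuclideanSpace ℝ (Fin n) →L[ℝ] EuclideanSpace ℝ (Fin n)) :
    |LinearMap.det (S : EuclideanSpace ℝ (Fin n) →ₗ[ℝ] EuclideanSpace ℝ (Fin n))| =
      ∏ k ∈ Finset.Icc 1 n, approxNumber k S := by
  classical
  set E := EuclideanSpace ℝ (Fin n) with hE
  set Sl : E →ₗ[ℝ] E := (S : E →ₗ[ℝ] E) with hSl
  set T : E →ₗ[ℝ] E := (LinearMap.adjoint Sl).comp Sl with hT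
  have hsym : T.IsSymmetric := by
    intro x y
    rw [hT, LinearMap.comp_apply, LinearMap.comp_apply, LinearMap.adjoint_inner_left,
      ← LinearMap.adjoint_inner_right]
  have hfin : Module.finrank ℝ E = n := finrank_euclideanSpace_fin
  set v0 := hsym.eigenvectorBasis hfin with hv0
  set μ0 := hsym.eigenvalues hfin with hμ0
  have hTv : ∀ i, T (v0 i) = μ0 i • v0 i := fun i => by
    exact_mod_cast hsym.apply_eigenvectorBasis hfin i
  have hTxx : ∀ x : E, ⟪T x, x⟫ = ‖S x‖ ^ 2 := by
    intro x
    rw [hT, LinearMap.comp_apply, LinearMap.adjoint_inner_left]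
    rw [real_inner_self_eq_norm_sq]
    rfl
  have hSnorm0 : ∀ x : E, ‖S x‖ ^ 2 = ∑ i, μ0 i * ⟪v0 i, x⟫ ^ 2 := by
    intro x
    rw [← hTxx x, ← v0.sum_inner_mul_inner (T x) x]
    refine Finset.sum_congr rfl fun i _ => ?_
    rw [hsym x (v0 i), hTv i, real_inner_smul_right, real_inner_comm x (v0 i)]
    ring
  have hμ0nonneg : ∀ i, 0 ≤ μ0 i := by
    intro i
    have h1 := hTxx (v0 i)
    rw [hTv i, real_inner_smul_left, real_inner_self_eq_norm_sq, v0.orthonormal.1 i] at h1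
    have : μ0 i = ‖S (v0 i)‖ ^ 2 := by simpa using h1
    rw [this]; positivity
  -- sorted eigenvalues
  set p : Equiv.Perm (Fin n) := Fin.revPerm.trans (Tuple.sort μ0) with hp
  set μ : Fin n → ℝ := μ0 ∘ p with hμ
  have hanti : Antitone μ := by
    intro i j hij
    have : (Fin.rev j) ≤ (Fin.rev i) := Fin.rev_le_rev.mpr hij
    exact Tuple.monotone_sort μ0 this
  set v : OrthonormalBasis (Fin n) ℝ E := v0.reindex p.symm with hv
  have hvp : ∀ i, v i = v0 (p i) := by
    intro i
    rw [hv, OrthonormalBasis.reindex_apply, Equiv.symm_symm]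
  have hSnorm : ∀ x : E, ‖S x‖ ^ 2 = ∑ i, μ i * ⟪v i, x⟫ ^ 2 := by
    intro x
    rw [hSnorm0 x, ← Equiv.sum_comp p (fun i => μ0 i * ⟪v0 i, x⟫ ^ 2)]
    refine Finset.sum_congr rfl fun i _ => ?_
    rw [hμ, hvp i]
    rfl
  -- determinant computation
  have hdetT : LinearMap.det T = ∏ i, μ0 i := by
    rw [← LinearMap.det_toMatrix v0.toBasis]
    have hmat : (LinearMap.toMatrix v0.toBasis v0.toBasis) T = Matrix.diagonal μ0 := by
      ext i j
      rw [LinearMap.toMatrix_apply, OrthonormalBasis.coe_toBasis, hTv j, map_smul]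
      rw [show v0 j = v0.toBasis j from (OrthonormalBasis.coe_toBasis v0 ▸ rfl),
        Module.Basis.repr_self]
      rw [Finsupp.smul_apply, Finsupp.single_apply, Matrix.diagonal_apply]
      by_cases h : i = j
      · subst h; simp
      · simp [h, Ne.symm h]
    rw [hmat, Matrix.det_diagonal]
  have hdetadj : LinearMap.det (LinearMap.adjoint Sl) = LinearMap.det Sl := by
    rw [← LinearMap.det_toMatrix v0.toBasis, ← LinearMap.det_toMatrix v0.toBasis Sl,
      LinearMap.toMatrix_adjoint, Matrix.det_conjTranspose]
    exact star_trivial _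
  have hdet2 : LinearMap.det Sl ^ 2 = ∏ i, μ0 i := by
    rw [← hdetT, hT, LinearMap.det_comp, hdetadj, sq]
  -- approximation numbers equal square roots of sorted eigenvalues
  have happrox : ∀ j : Fin n, approxNumber ((j : ℕ) + 1) S = Real.sqrt (μ j) :=
    approxNumber_eq_sqrt S v μ (fun i => hμ0nonneg (p i)) hanti hSnorm
  have hprod : ∏ k ∈ Finset.Icc 1 n, approxNumber k S = ∏ j : Fin n, Real.sqrt (μ j) := by
    refine Finset.prod_bij' (fun a ha => (⟨a - 1, by
        simp only [Finset.mem_Icc] at ha; omega⟩ : Fin n))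
      (fun b _ => (b : ℕ) + 1) ?_ ?_ ?_ ?_ ?_
    · intro a ha; exact Finset.mem_univ _
    · intro b _; simp only [Finset.mem_Icc]; exact ⟨by omega, b.2⟩
    · intro a ha; simp only [Finset.mem_Icc] at ha; simp; omega
    · intro b _; simp
    · intro a ha
      simp only [Finset.mem_Icc] at ha
      have : (((⟨a - 1, by omega⟩ : Fin n) : ℕ) + 1) = a := by simp; omega
      rw [← happrox ⟨a - 1, by omega⟩, this]
  have hμprod : ∏ i, μ i = ∏ i, μ0 i := by
    rw [hμ]
    exact Equiv.prod_comp p μ0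
  calc |LinearMap.det Sl| = Real.sqrt (LinearMap.det Sl ^ 2) := (Real.sqrt_sq_eq_abs _).symm
    _ = Real.sqrt (∏ i, μ i) := by rw [hdet2, hμprod]
    _ = ∏ i, Real.sqrt (μ i) := Real.sqrt_prod' _ _ (fun i _ => hμ0nonneg (p i))
    _ = ∏ k ∈ Finset.Icc 1 n, approxNumber k S := hprod.symm
end

section
/- Let n ≥ 1 and 0 < σ < 1, and let T_n be the n × n real matrix with entries (T_n)_{ij} = δ_{j,i+1} + σ · δ_{i,n} δ_{j,1}, regarded as a bounded linear operator on the n-dimensional real Euclidean space ℓ₂ⁿ. Then its approximation numbers satisfy a_k(T_n) = 1 for all 1 ≤ k < n, and a_n(T_n) = σ. -/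
open Module

lemma approxNumber_eq_of {X Y : Type*} [NormedAddCommGroup X] [NormedSpace ℝ X]
    [NormedAddCommGroup Y] [NormedSpace ℝ Y] (k : ℕ) (S : X →L[ℝ] Y) (c : ℝ)
    (hmem : ∃ L : X →L[ℝ] Y, LinearMap.rank (L : X →ₗ[ℝ] Y) < k ∧ ‖S - L‖ ≤ c)
    (hlb : ∀ L : X →L[ℝ] Y, LinearMap.rank (L : X →ₗ[ℝ] Y) < k → c ≤ ‖S - L‖) :
    approxNumber k S = c := by
  obtain ⟨L₀, hL₀, hle⟩ := hmem
  unfold approxNumber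
  apply le_antisymm
  · refine le_trans (csInf_le ⟨c, ?_⟩ ⟨L₀, hL₀, rfl⟩) hle
    rintro r ⟨L, hL, rfl⟩
    exact hlb L hL
  · refine le_csInf ⟨‖S - L₀‖, L₀, hL₀, rfl⟩ ?_
    rintro r ⟨L, hL, rfl⟩
    exact hlb L hL

namespace ShiftAux

variable {m : ℕ}

local notation "E" => EuclideanSpace ℝ (Fin (m+1))

lemma coord (M : Matrix (Fin (m+1)) (Fin (m+1)) ℝ) (x : E) (i : Fin (m+1)) :
    (Matrix.toEuclideanLin M).toContinuousLinearMap x i = ∑ j, M i j * x j := rfl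

lemma normE (x : E) : ‖x‖ = Real.sqrt (∑ i, (x i)^2) := by
  simp [EuclideanSpace.norm_eq, Real.norm_eq_abs, sq_abs]

lemma sum_shift (f : Fin (m+1) → ℝ) : ∑ i, f (i+1) = ∑ i, f i :=
  Fintype.sum_equiv (Equiv.addRight 1) _ _ (fun _ => rfl)

lemma val_add_one' (i : Fin (m+1)) :
    ((i+1 : Fin (m+1)) : ℕ) = if (i:ℕ) = m then 0 else (i:ℕ)+1 := by
  rw [Fin.val_add_one]
  congr 1
  simp [Fin.ext_iff, Fin.val_last]

lemma finrank_ker_proj (j : Fin (m+1)) :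
    finrank ℝ (LinearMap.ker ((EuclideanSpace.proj j : E →L[ℝ] ℝ) : E →ₗ[ℝ] ℝ)) = m := by
  have h := LinearMap.finrank_range_add_finrank_ker
    ((EuclideanSpace.proj j : E →L[ℝ] ℝ) : E →ₗ[ℝ] ℝ)
  have hsurj : LinearMap.range ((EuclideanSpace.proj j : E →L[ℝ] ℝ) : E →ₗ[ℝ] ℝ) = ⊤ := by
    rw [LinearMap.range_eq_top]
    intro c
    exact ⟨EuclideanSpace.single j c, by simp⟩
  rw [hsurj, finrank_top] at h
  simp [finrank_euclideanSpace] at h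
  omega

lemma rank_lt_iff (L : E →L[ℝ] E) (k : ℕ) :
    LinearMap.rank (L : E →ₗ[ℝ] E) < (k : Cardinal) ↔
      finrank ℝ (LinearMap.range (L : E →ₗ[ℝ] E)) < k := by
  rw [LinearMap.rank, ← Module.finrank_eq_rank, Nat.cast_lt]

lemma exists_ker₁ (L : E →L[ℝ] E)
    (h : finrank ℝ (LinearMap.range (L : E →ₗ[ℝ] E)) < m + 1) :
    ∃ x : E, x ≠ 0 ∧ L x = 0 := by
  have h1 := LinearMap.finrank_range_add_finrank_ker (L : E →ₗ[ℝ] E)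
  rw [finrank_euclideanSpace, Fintype.card_fin] at h1
  have hk : LinearMap.ker (L : E →ₗ[ℝ] E) ≠ ⊥ := by
    intro hbot
    rw [hbot, finrank_bot] at h1
    omega
  obtain ⟨x, hx, hx0⟩ := (Submodule.ne_bot_iff _).1 hk
  exact ⟨x, hx0, hx⟩

lemma exists_ker₂ (L : E →L[ℝ] E)
    (h : finrank ℝ (LinearMap.range (L : E →ₗ[ℝ] E)) + 2 ≤ m + 1) :
    ∃ x : E, x ≠ 0 ∧ L x = 0 ∧ x 0 = 0 := by
  have h1 := LinearMap.finrank_range_add_finrank_ker (L : E →ₗ[ℝ] E)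
  rw [finrank_euclideanSpace, Fintype.card_fin] at h1
  have h2 : finrank ℝ
      (LinearMap.ker ((EuclideanSpace.proj (0 : Fin (m+1)) : E →L[ℝ] ℝ) : E →ₗ[ℝ] ℝ)) = m :=
    finrank_ker_proj 0
  have h3 := Submodule.finrank_sup_add_finrank_inf_eq
    (LinearMap.ker (L : E →ₗ[ℝ] E))
    (LinearMap.ker ((EuclideanSpace.proj (0 : Fin (m+1)) : E →L[ℝ] ℝ) : E →ₗ[ℝ] ℝ))
  have h4 : finrank ℝ ↥(LinearMap.ker (L : E →ₗ[ℝ] E) ⊔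
      LinearMap.ker ((EuclideanSpace.proj (0 : Fin (m+1)) : E →L[ℝ] ℝ) : E →ₗ[ℝ] ℝ)) ≤ m + 1 := by
    have := Submodule.finrank_le (LinearMap.ker (L : E →ₗ[ℝ] E) ⊔
      LinearMap.ker ((EuclideanSpace.proj (0 : Fin (m+1)) : E →L[ℝ] ℝ) : E →ₗ[ℝ] ℝ))
    rwa [finrank_euclideanSpace, Fintype.card_fin] at this
  have h5 : 0 < finrank ℝ ↥(LinearMap.ker (L : E →ₗ[ℝ] E) ⊓
      LinearMap.ker ((EuclideanSpace.proj (0 : Fin (m+1)) : E →L[ℝ] ℝ) : E →ₗ[ℝ] ℝ)) := by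
    omega
  have h6 : (LinearMap.ker (L : E →ₗ[ℝ] E) ⊓
      LinearMap.ker ((EuclideanSpace.proj (0 : Fin (m+1)) : E →L[ℝ] ℝ) : E →ₗ[ℝ] ℝ)) ≠ ⊥ := by
    intro hbot
    rw [hbot, finrank_bot] at h5
    omega
  obtain ⟨x, hx, hx0⟩ := (Submodule.ne_bot_iff _).1 h6
  rw [Submodule.mem_inf] at hx
  refine ⟨x, hx0, hx.1, ?_⟩
  have := hx.2
  rw [LinearMap.mem_ker] at this
  simpa using this

lemma rank_lt_of_coord (L : E →L[ℝ] E) (j : Fin (m+1)) (h : ∀ x, L x j = 0) :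
    finrank ℝ (LinearMap.range (L : E →ₗ[ℝ] E)) < m + 1 := by
  have hle : LinearMap.range (L : E →ₗ[ℝ] E) ≤
      LinearMap.ker ((EuclideanSpace.proj j : E →L[ℝ] ℝ) : E →ₗ[ℝ] ℝ) := by
    rintro y ⟨x, rfl⟩
    simpa using h x
  have := Submodule.finrank_mono hle
  rw [finrank_ker_proj] at this
  omega

section shift

variable {σ : ℝ} (hσ0 : 0 < σ) (hσ1 : σ < 1) {T : Matrix (Fin (m+1)) (Fin (m+1)) ℝ}
  (hT : ∀ i j : Fin (m+1), T i j =
      (if (j : ℕ) = (i : ℕ) + 1 then 1 else 0) +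
        σ * (if (i : ℕ) = m then 1 else 0) * (if (j : ℕ) = 0 then 1 else 0))

include hσ0 hσ1 hT

lemma shift_apply (x : E) (i : Fin (m+1)) :
    (Matrix.toEuclideanLin T).toContinuousLinearMap x i
      = (if (i:ℕ) = m then σ else 1) * x (i+1) := by
  rw [coord]
  have hz : ∀ j ∈ Finset.univ, j ≠ i + 1 → T i j * x j = 0 := by
    intro j _ hj
    have hj' : (j:ℕ) ≠ ((i+1 : Fin (m+1)):ℕ) := fun h => hj (Fin.ext h)
    rw [val_add_one'] at hj'
    rw [hT]
    by_cases hi : (i:ℕ) = m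
    · rw [if_pos hi] at hj'
      have h1 : ¬ ((j:ℕ) = (i:ℕ)+1) := by have := j.isLt; omega
      simp [h1, hj']
    · rw [if_neg hi] at hj'
      simp [hj', hi]
  have he : T i (i+1) = if (i:ℕ) = m then σ else 1 := by
    rw [hT, val_add_one']
    by_cases hi : (i:ℕ) = m
    · have h1 : ¬ ((0:ℕ) = (i:ℕ) + 1) := by omega
      simp [hi, h1]
    · simp [hi]
  rw [Finset.sum_eq_single (i+1) hz (fun h => absurd (Finset.mem_univ _) h), he]

lemma normA (x : E) : ‖(Matrix.toEuclideanLin T).toContinuousLinearMap x‖ ≤ ‖x‖ := by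
  rw [normE, normE]
  apply Real.sqrt_le_sqrt
  calc ∑ i, ((Matrix.toEuclideanLin T).toContinuousLinearMap x i)^2
      = ∑ i : Fin (m+1), ((if (i:ℕ) = m then σ else 1) * x (i+1))^2 := by
        refine Finset.sum_congr rfl fun i _ => ?_
        rw [shift_apply hσ0 hσ1 hT]
    _ ≤ ∑ i, (x (i+1))^2 := by
        apply Finset.sum_le_sum
        intro i _
        by_cases hi : (i:ℕ) = m
        · rw [if_pos hi, mul_pow]
          nlinarith [sq_nonneg (x (i+1)), mul_nonneg (mul_nonneg (sub_nonneg.2 hσ1.le)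
            (by linarith : (0:ℝ) ≤ 1 + σ)) (sq_nonneg (x (i+1)))]
        · rw [if_neg hi, one_mul]
    _ = ∑ i, (x i)^2 := sum_shift (fun i => (x i)^2)

lemma normB (x : E) : σ * ‖x‖ ≤ ‖(Matrix.toEuclideanLin T).toContinuousLinearMap x‖ := by
  rw [normE, normE]
  have hs : σ * Real.sqrt (∑ i, (x i)^2) = Real.sqrt (σ^2 * ∑ i, (x i)^2) := by
    rw [Real.sqrt_mul (sq_nonneg σ), Real.sqrt_sq hσ0.le]
  rw [hs]
  apply Real.sqrt_le_sqrt
  calc σ^2 * ∑ i, (x i)^2 = ∑ i, σ^2 * (x i)^2 := Finset.mul_sum _ _ _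
    _ = ∑ i, σ^2 * (x (i+1))^2 := (sum_shift (fun i => σ^2 * (x i)^2)).symm
    _ ≤ ∑ i, ((Matrix.toEuclideanLin T).toContinuousLinearMap x i)^2 := by
        apply Finset.sum_le_sum
        intro i _
        rw [shift_apply hσ0 hσ1 hT]
        by_cases hi : (i:ℕ) = m
        · rw [if_pos hi, mul_pow]
        · rw [if_neg hi, one_mul]
          nlinarith [sq_nonneg (x (i+1)), mul_nonneg (mul_nonneg (sub_nonneg.2 hσ1.le)
            (by linarith : (0:ℝ) ≤ 1 + σ)) (sq_nonneg (x (i+1)))]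

lemma normC (x : E) (hx0 : x 0 = 0) :
    ‖(Matrix.toEuclideanLin T).toContinuousLinearMap x‖ = ‖x‖ := by
  rw [normE, normE]
  congr 1
  calc ∑ i, ((Matrix.toEuclideanLin T).toContinuousLinearMap x i)^2
      = ∑ i, (x (i+1))^2 := by
        refine Finset.sum_congr rfl fun i _ => ?_
        rw [shift_apply hσ0 hσ1 hT]
        by_cases hi : (i:ℕ) = m
        · have h1 : i + 1 = (0 : Fin (m+1)) := by
            rw [Fin.ext_iff, val_add_one']
            simp [hi]
          rw [h1, hx0]
          simp
        · rw [if_neg hi, one_mul]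
    _ = ∑ i, (x i)^2 := sum_shift (fun i => (x i)^2)

end shift

end ShiftAux

open ShiftAux Module

theorem approxNumbers_of_shift_matrix (n : ℕ) (hn : 1 ≤ n) (σ : ℝ) (hσ0 : 0 < σ) (hσ1 : σ < 1)
    (T : Matrix (Fin n) (Fin n) ℝ)
    (hT : ∀ i j : Fin n, T i j =
      (if (j : ℕ) = (i : ℕ) + 1 then 1 else 0) +
        σ * (if (i : ℕ) = n - 1 then 1 else 0) * (if (j : ℕ) = 0 then 1 else 0)) :
    (∀ k : ℕ, 1 ≤ k → k < n →
        approxNumber k (Matrix.toEuclideanLin T).toContinuousLinearMap = 1) ∧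
      approxNumber n (Matrix.toEuclideanLin T).toContinuousLinearMap = σ := by
  obtain ⟨m, rfl⟩ : ∃ m, n = m + 1 := ⟨n - 1, by omega⟩
  simp only [Nat.add_sub_cancel] at hT
  have hA := normA hσ0 hσ1 hT
  have hB := normB hσ0 hσ1 hT
  have hC := normC hσ0 hσ1 hT
  set Tc := (Matrix.toEuclideanLin T).toContinuousLinearMap with hTc
  have hTcnorm : ‖Tc‖ ≤ 1 := Tc.opNorm_le_bound zero_le_one (fun x => by
    simpa using hA x)
  constructor
  · intro k hk1 hkn
    apply approxNumber_eq_of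
    · refine ⟨0, ?_, by rw [sub_zero]; exact hTcnorm⟩
      rw [ContinuousLinearMap.coe_zero, LinearMap.rank_zero]
      exact_mod_cast hk1
    · intro L hL
      have hfr := (rank_lt_iff L k).1 hL
      obtain ⟨x, hx0, hLx, hx00⟩ := exists_ker₂ L (by omega)
      have h2 : ‖(Tc - L) x‖ ≤ ‖Tc - L‖ * ‖x‖ := (Tc - L).le_opNorm x
      have h3 : (Tc - L) x = Tc x := by simp [hLx]
      rw [h3, hC x hx00] at h2
      have hxpos : 0 < ‖x‖ := norm_pos_iff.2 hx0
      nlinarith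
  · -- the finite-rank approximant: the shift without the corner
    set T₀ : Matrix (Fin (m+1)) (Fin (m+1)) ℝ :=
      fun i j => if (j : ℕ) = (i : ℕ) + 1 then 1 else 0 with hT₀
    set L₀ := (Matrix.toEuclideanLin T₀).toContinuousLinearMap with hL₀
    have hlast : ∀ x : EuclideanSpace ℝ (Fin (m+1)), L₀ x (Fin.last m) = 0 := by
      intro x
      rw [hL₀, coord]
      apply Finset.sum_eq_zero
      intro j _
      have hj := j.isLt
      have hcond : ¬ ((j:ℕ) = m + 1) := by omega
      simp [hT₀, Fin.val_last, hcond]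
    have hdiff : ∀ (x : EuclideanSpace ℝ (Fin (m+1))) (i : Fin (m+1)),
        (Tc - L₀) x i = (if (i:ℕ) = m then σ * x 0 else 0) := by
      intro x i
      have h1 : (Tc - L₀) x i = Tc x i - L₀ x i := rfl
      rw [h1, hTc, hL₀, coord, coord, ← Finset.sum_sub_distrib]
      have heach : ∀ j : Fin (m+1), T i j * x j - T₀ i j * x j =
          (if (i : ℕ) = m then (if (j : ℕ) = 0 then σ * x j else 0) else 0) := by
        intro j
        rw [hT]
        by_cases hi : (i:ℕ) = m <;> by_cases hj : (j:ℕ) = 0 <;>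
          simp [hT₀, hi, hj] <;> ring
      rw [Finset.sum_congr rfl (fun j _ => heach j)]
      by_cases hi : (i:ℕ) = m
      · simp only [hi, if_true]
        have h0 : ∀ j : Fin (m+1), ((j:ℕ) = 0) = (j = 0) := fun j => by
          rw [Fin.ext_iff]; simp
        simp only [h0]
        rw [Finset.sum_ite_eq' Finset.univ (0 : Fin (m+1)) (fun j => σ * x j)]
        simp
      · simp [hi]
    have hnorm : ‖Tc - L₀‖ ≤ σ := by
      apply ContinuousLinearMap.opNorm_le_bound _ hσ0.le
      intro x
      rw [normE]
      have hsq : ∀ i : Fin (m+1), ((Tc - L₀) x i)^2 =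
          (if i = Fin.last m then (σ * x 0)^2 else 0) := by
        intro i
        rw [hdiff x i]
        by_cases hi : (i:ℕ) = m
        · have hil : i = Fin.last m := by rw [Fin.ext_iff, Fin.val_last]; exact hi
          simp [hil, hi]
        · have hil : i ≠ Fin.last m := by rw [Ne, Fin.ext_iff, Fin.val_last]; exact hi
          simp [hil, hi]
      rw [Finset.sum_congr rfl (fun i _ => hsq i),
        Finset.sum_ite_eq' Finset.univ (Fin.last m) (fun _ => (σ * x 0)^2)]
      simp only [Finset.mem_univ, if_true]
      have h1 : Real.sqrt ((σ * x 0)^2) = σ * |x 0| := by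
        rw [Real.sqrt_sq_eq_abs, abs_mul, abs_of_pos hσ0]
      rw [h1]
      have h2 : |x 0| ≤ ‖x‖ := by
        rw [normE]
        have hle : (x 0)^2 ≤ ∑ i, (x i)^2 := by
          apply Finset.single_le_sum (f := fun i => (x i)^2)
          · intro i _; positivity
          · exact Finset.mem_univ 0
        calc |x 0| = Real.sqrt ((x 0)^2) := (Real.sqrt_sq_eq_abs _).symm
          _ ≤ Real.sqrt (∑ i, (x i)^2) := Real.sqrt_le_sqrt hle
      nlinarith
    apply approxNumber_eq_of
    · exact ⟨L₀, (rank_lt_iff L₀ (m+1)).2 (rank_lt_of_coord L₀ (Fin.last m) hlast), hnorm⟩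
    · intro L hL
      have hfr := (rank_lt_iff L (m+1)).1 hL
      obtain ⟨x, hx0, hLx⟩ := exists_ker₁ L hfr
      have h2 : ‖(Tc - L) x‖ ≤ ‖Tc - L‖ * ‖x‖ := (Tc - L).le_opNorm x
      have h3 : (Tc - L) x = Tc x := by simp [hLx]
      rw [h3] at h2
      have hxpos : 0 < ‖x‖ := norm_pos_iff.2 hx0
      have := hB x
      nlinarith
end
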